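/- arXiv:1609.03349 — 2 statements merged into one kernel-verified Lean document; each statement's English description precedes it below -/
import Mathlib

section
/- The function x ↦ (1-2^{-x})^x is strictly increasing for x > 1/log 2. -/
open Real Set

private lemma log2_pos : 0 < Real.log 2 := Real.log_pos one_lt_two

private lemma aux_hasDerivAt (x : ℝ) (hx : x ∈ Set.Ioi (1 / Real.log 2)) :
    HasDerivAt (fun x : ℝ => x * Real.log (1 - Real.exp (-(x * Real.log 2))))
      (Real.log (1 - Real.exp (-(x * Real.log 2))) +
        x * (Real.log 2 * Real.exp (-(x * Real.log 2)) / (1 - Real.exp (-(x * Real.log 2))))) x := by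
  have hx1 : 1 < x * Real.log 2 := (div_lt_iff₀ log2_pos).mp hx
  have ht1 : Real.exp (-(x * Real.log 2)) < 1 := by
    rw [Real.exp_lt_one_iff]; linarith
  have hu : (0:ℝ) < 1 - Real.exp (-(x * Real.log 2)) := by linarith
  have h1 : HasDerivAt (fun x : ℝ => Real.exp (-(x * Real.log 2)))
      (Real.exp (-(x * Real.log 2)) * -(Real.log 2)) x := by
    simpa using (((hasDerivAt_id x).mul_const (Real.log 2)).neg).exp
  have h2 : HasDerivAt (fun x : ℝ => 1 - Real.exp (-(x * Real.log 2)))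
      (Real.log 2 * Real.exp (-(x * Real.log 2))) x := by
    have := h1.const_sub 1
    exact this.congr_deriv (by ring)
  have h3 := h2.log (ne_of_gt hu)
  have h4 := (hasDerivAt_id x).mul h3
  exact h4.congr_deriv (by simp)

private lemma aux_deriv_pos (x : ℝ) (hx : x ∈ Set.Ioi (1 / Real.log 2)) :
    0 < Real.log (1 - Real.exp (-(x * Real.log 2))) +
        x * (Real.log 2 * Real.exp (-(x * Real.log 2)) / (1 - Real.exp (-(x * Real.log 2)))) := by
  set t := Real.exp (-(x * Real.log 2)) with ht
  have hx1 : 1 < x * Real.log 2 := (div_lt_iff₀ log2_pos).mp hx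
  have ht0 : 0 < t := Real.exp_pos _
  have hlogt : Real.log t = -(x * Real.log 2) := Real.log_exp _
  have hltneg : Real.log t < -1 := by rw [hlogt]; linarith
  have ht1 : t < 1 := by
    rw [ht, Real.exp_lt_one_iff]; linarith
  have hu : (0:ℝ) < 1 - t := by linarith
  -- log (1 - t) ≥ -(t/(1-t))
  have hlog1 : -(t / (1 - t)) ≤ Real.log (1 - t) := by
    have h := Real.log_le_sub_one_of_pos (x := (1 - t)⁻¹) (by positivity)
    rw [Real.log_inv] at h
    have : (1 - t)⁻¹ - 1 = t / (1 - t) := by field_simp; ring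
    linarith [this ▸ h]
  have key : 0 < (1 - t) * Real.log (1 - t) - t * Real.log t := by
    have h1 : -t ≤ (1 - t) * Real.log (1 - t) := by
      have := mul_le_mul_of_nonneg_left hlog1 (le_of_lt hu)
      have heq : (1 - t) * -(t / (1 - t)) = -t := by field_simp
      linarith [heq ▸ this]
    have h2 : t * Real.log t < -t := by nlinarith
    linarith
  have heq : Real.log (1 - t) + x * (Real.log 2 * t / (1 - t)) =
      ((1 - t) * Real.log (1 - t) - t * Real.log t) / (1 - t) := by
    have hxl : x * Real.log 2 = -Real.log t := by rw [hlogt]; ring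
    field_simp
    nlinarith [hxl]
  rw [heq]
  exact div_pos key hu

private lemma aux_strictMonoOn :
    StrictMonoOn (fun x : ℝ => x * Real.log (1 - Real.exp (-(x * Real.log 2))))
      (Set.Ioi (1 / Real.log 2)) := by
  apply strictMonoOn_of_deriv_pos (convex_Ioi _)
  · exact fun x hx => ((aux_hasDerivAt x hx).differentiableAt).continuousAt.continuousWithinAt
  · intro x hx
    rw [interior_Ioi] at hx
    rw [(aux_hasDerivAt x hx).deriv]
    exact aux_deriv_pos x hx

theorem strictMonoOn_one_sub_two_rpow_neg :
    StrictMonoOn (fun x : ℝ => (1 - (2 : ℝ) ^ (-x)) ^ x)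
      (Set.Ioi (1 / Real.log 2)) := by
  intro a ha b hb hab
  have hrw : ∀ x ∈ Set.Ioi (1 / Real.log 2),
      (1 - (2 : ℝ) ^ (-x)) ^ x = Real.exp (x * Real.log (1 - Real.exp (-(x * Real.log 2)))) := by
    intro x hx
    have hx1 : 1 < x * Real.log 2 := (div_lt_iff₀ log2_pos).mp hx
    have h2 : (2 : ℝ) ^ (-x) = Real.exp (-(x * Real.log 2)) := by
      rw [Real.rpow_def_of_pos two_pos]; congr 1; ring
    have ht1 : Real.exp (-(x * Real.log 2)) < 1 := by
      rw [Real.exp_lt_one_iff]; linarith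
    have hu : (0:ℝ) < 1 - (2:ℝ) ^ (-x) := by rw [h2]; linarith
    rw [Real.rpow_def_of_pos hu, h2, mul_comm]
  simp only
  rw [hrw a ha, hrw b hb]
  exact Real.exp_lt_exp.mpr (aux_strictMonoOn ha hb hab)
end

section
/- The function x ↦ ((1+2^{-x})/(1-2^{-x}))^x is strictly decreasing for x > 1/log 2. -/
open Real

lemma key_ineq {t : ℝ} (ht0 : 0 < t) (ht1 : t < 1) :
    Real.log (1 + t) - Real.log (1 - t) < 2 * t / (1 - t ^ 2) := by
  have h1t : (0:ℝ) < 1 - t := by linarith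
  have h1t' : (0:ℝ) < 1 + t := by linarith
  set r : ℝ := (1 + t) / (1 - t) with hr
  have hr1 : 1 < r := by rw [hr, lt_div_iff₀ h1t]; linarith
  have hy : 0 < Real.log r := Real.log_pos hr1
  have hlog : Real.log (1 + t) - Real.log (1 - t) = Real.log r := by
    rw [hr, Real.log_div (by positivity) (by positivity)]
  have hsinh : Real.sinh (Real.log r) = 2 * t / (1 - t ^ 2) := by
    rw [Real.sinh_eq, Real.exp_log (by positivity), Real.exp_neg, Real.exp_log (by positivity), hr]
    rw [div_eq_div_iff (by positivity) (by nlinarith)]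
    field_simp
    ring
  rw [hlog, ← hsinh]
  exact Real.self_lt_sinh_iff.2 hy

lemma aux_deriv {x : ℝ} (hx : 1 / Real.log 2 < x) :
    ∃ D : ℝ, HasDerivAt (fun x : ℝ => x * (Real.log (1 + (2:ℝ) ^ (-x)) - Real.log (1 - (2:ℝ) ^ (-x)))) D x ∧ D < 0 := by
  have hlog2 : 0 < Real.log 2 := Real.log_pos one_lt_two
  have hx0 : 0 < x := lt_trans (by positivity) hx
  have hx1 : 1 < x * Real.log 2 := by
    rw [div_lt_iff₀ hlog2] at hx; linarith
  set T : ℝ := (2:ℝ) ^ (-x) with hT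
  have hT0 : 0 < T := Real.rpow_pos_of_pos (by norm_num) _
  have hT1 : T < 1 := Real.rpow_lt_one_of_one_lt_of_neg one_lt_two (by linarith)
  have h1p : (0:ℝ) < 1 + T := by linarith
  have h1m : (0:ℝ) < 1 - T := by linarith
  have hderivT : HasDerivAt (fun x : ℝ => (2:ℝ) ^ (-x)) ((2:ℝ) ^ (-x) * Real.log 2 * (-1)) x := by
    exact ((Real.hasStrictDerivAt_const_rpow (by norm_num) (-x)).hasDerivAt).comp x (hasDerivAt_neg x)
  have hd1 : HasDerivAt (fun x : ℝ => Real.log (1 + (2:ℝ) ^ (-x)))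
      ((0 + (2:ℝ) ^ (-x) * Real.log 2 * (-1)) / (1 + (2:ℝ) ^ (-x))) x :=
    (((hasDerivAt_const x (1:ℝ)).add hderivT).log (by show (1:ℝ) + (2:ℝ) ^ (-x) ≠ 0; rw [← hT]; positivity))
  have hd2 : HasDerivAt (fun x : ℝ => Real.log (1 - (2:ℝ) ^ (-x)))
      ((0 - (2:ℝ) ^ (-x) * Real.log 2 * (-1)) / (1 - (2:ℝ) ^ (-x))) x :=
    (((hasDerivAt_const x (1:ℝ)).sub hderivT).log (by show (1:ℝ) - (2:ℝ) ^ (-x) ≠ 0; rw [← hT]; linarith))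
  have hD := (hasDerivAt_id x).mul (hd1.sub hd2)
  simp only [id_eq, one_mul] at hD
  refine ⟨_, hD, ?_⟩
  rw [← hT]
  have key := key_ineq hT0 hT1
  have h2 : 2 * T / (1 - T ^ 2) < x * Real.log 2 * (2 * T / (1 - T ^ 2)) := by
    nlinarith [div_pos (by linarith : (0:ℝ) < 2 * T) (by nlinarith : (0:ℝ) < 1 - T ^ 2)]
  have heq : (0 + T * Real.log 2 * (-1)) / (1 + T) - (0 - T * Real.log 2 * (-1)) / (1 - T)
      = -(Real.log 2 * (2 * T / (1 - T ^ 2))) := by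
    have hne3 : (1 - T ^ 2) ≠ 0 := by nlinarith
    field_simp
    ring
  rw [heq]
  have : Real.log (1 + T) - Real.log (1 - T) < x * (Real.log 2 * (2 * T / (1 - T ^ 2))) := by
    calc Real.log (1 + T) - Real.log (1 - T) < 2 * T / (1 - T ^ 2) := key
    _ < x * Real.log 2 * (2 * T / (1 - T ^ 2)) := h2
    _ = x * (Real.log 2 * (2 * T / (1 - T ^ 2))) := by ring
  show Real.log (1 + T) - Real.log (1 - T) + x * -(Real.log 2 * (2 * T / (1 - T ^ 2))) < 0
  linarith

theorem strictAntiOn_ratio_two_rpow_neg :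
    StrictAntiOn (fun x : ℝ => ((1 + (2 : ℝ) ^ (-x)) / (1 - (2 : ℝ) ^ (-x))) ^ x)
      (Set.Ioi (1 / Real.log 2)) := by
  have hlog2 : 0 < Real.log 2 := Real.log_pos one_lt_two
  set h : ℝ → ℝ := fun x => x * (Real.log (1 + (2:ℝ) ^ (-x)) - Real.log (1 - (2:ℝ) ^ (-x))) with hh
  have hanti : StrictAntiOn h (Set.Ioi (1 / Real.log 2)) := by
    apply strictAntiOn_of_deriv_neg (convex_Ioi _)
    · intro x hx
      obtain ⟨D, hD, _⟩ := aux_deriv hx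
      exact hD.continuousAt.continuousWithinAt
    · intro x hx
      rw [interior_Ioi] at hx
      obtain ⟨D, hD, hDneg⟩ := aux_deriv hx
      rwa [hD.deriv]
  intro a ha b hb hab
  have hfa : ∀ y ∈ Set.Ioi (1 / Real.log 2),
      ((1 + (2 : ℝ) ^ (-y)) / (1 - (2 : ℝ) ^ (-y))) ^ y = Real.exp (h y) := by
    intro y hy
    have hy0 : 0 < y := lt_trans (by positivity) hy
    have hT0 : 0 < (2:ℝ) ^ (-y) := Real.rpow_pos_of_pos (by norm_num) _
    have hT1 : (2:ℝ) ^ (-y) < 1 := Real.rpow_lt_one_of_one_lt_of_neg one_lt_two (by linarith)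
    have hpos : 0 < (1 + (2:ℝ) ^ (-y)) / (1 - (2:ℝ) ^ (-y)) := by
      apply div_pos <;> linarith
    rw [Real.rpow_def_of_pos hpos, Real.log_div (by linarith) (by linarith), hh, mul_comm]
  simp only [hfa a ha, hfa b hb]
  exact Real.exp_lt_exp.2 (hanti ha hb hab)
end
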